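/- Assume condition (O). Then for all a, b ∈ A, M(Θ(a,b)) = M(a) ↔ M(b), that is, {μ ∈ Cm : (a,b) ∈ μ} = Cm \ ((M(a) Δ M(b))↓). (This is Proposition 15 of the paper: under congruence orderability of all quotients, the principal congruence Θ(a,b) is represented by the Heyting-algebra equivalence of the upsets M(a) and M(b) in the lattice of upward closed subsets of the poset Cm.) -/
import Mathlib


variable {A : Type*}

/-- `η` is a completely meet irreducible member of `C`, with (unique) cover `p` in `C`. -/
def IsCMI (C : Set (Setoid A)) (η p : Setoid A) : Prop :=
  η ∈ C ∧ p ∈ C ∧ η < p ∧ ∀ β ∈ C, η < β → p ≤ β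

/-- A single up or down transposition between the intervals `I[pq.1, pq.2]`
and `I[rs.1, rs.2]` of `C`. -/
def Persp (C : Set (Setoid A)) (pq rs : Setoid A × Setoid A) : Prop :=
  pq.1 ∈ C ∧ pq.2 ∈ C ∧ rs.1 ∈ C ∧ rs.2 ∈ C ∧
    ((pq.1 = pq.2 ⊓ rs.1 ∧ rs.2 = pq.2 ⊔ rs.1) ∨
      (rs.1 = rs.2 ⊓ pq.1 ∧ pq.2 = rs.2 ⊔ pq.1))

/-- Projectivity of intervals of `C`: a finite chain of up and down transpositions. -/
def Projective (C : Set (Setoid A)) : Setoid A × Setoid A → Setoid A × Setoid A → Prop :=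
  Relation.ReflTransGen (Persp C)

/-- Prime interval projectivity `φ ∼ ψ`: the prime intervals `I[φ,φ⁺]` and `I[ψ,ψ⁺]`
over completely meet irreducible members of `C` are projective. -/
def PIP (C : Set (Setoid A)) (φ ψ : Setoid A) : Prop :=
  ∃ p q, IsCMI C φ p ∧ IsCMI C ψ q ∧ Projective C (φ, p) (ψ, q)

/-- `Θ(a,b)`: the least member of `C` containing the pair `(a, b)`. -/
def theta (C : Set (Setoid A)) (a b : A) : Setoid A :=
  sInf {s | s ∈ C ∧ s.r a b}

/-- The relation `φ • ψ`: the pairs of `p = φ⁺ = ψ⁺` on which `φ` and `ψ` agree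
(the complement of the symmetric difference of `φ` and `ψ` intersected with `p`). -/
def Bul (p φ ψ : Setoid A) (x y : A) : Prop :=
  p.r x y ∧ (φ.r x y ↔ ψ.r x y)

/-- The set of completely meet irreducible members of `C`. -/
def CmSet (C : Set (Setoid A)) : Set (Setoid A) := {μ | ∃ p, IsCMI C μ p}

/-- `M(a) = {μ ∈ Cm : (1,a) ∈ μ}`. -/
def MsetA (C : Set (Setoid A)) (one a : A) : Set (Setoid A) :=
  {μ | μ ∈ CmSet C ∧ μ.r one a}

/-- The downward closure `X↓` of `X` inside the poset `Cm`. -/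
def DownCl (C : Set (Setoid A)) (X : Set (Setoid A)) : Set (Setoid A) :=
  {μ | μ ∈ CmSet C ∧ ∃ φ ∈ X, μ ≤ φ}

/-- The equivalence operation `S ↔ T := Cm \ ((S Δ T)↓)` of the Heyting algebra of
upward closed subsets of `Cm`. -/
def EqOpU (C : Set (Setoid A)) (S T : Set (Setoid A)) : Set (Setoid A) :=
  CmSet C \ DownCl C ((S \ T) ∪ (T \ S))


section Aux

variable (one : A) (C : Set (Setoid A))

lemma theta_mem (hInf : ∀ S ⊆ C, sInf S ∈ C) (a b : A) : theta C a b ∈ C :=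
  hInf _ (fun _ hs => hs.1)

lemma theta_rel (a b : A) : (theta C a b).r a b := fun _ hs => hs.2

lemma theta_le {s : Setoid A} (hs : s ∈ C) {a b : A} (hab : s.r a b) :
    theta C a b ≤ s := sInf_le ⟨hs, hab⟩

/-- Zorn extension: any member of `C` not containing `(1,a)` extends to a completely
meet irreducible member of `C` not containing `(1,a)`. -/
lemma exists_cmi (hSup : ∀ S ⊆ C, sSup S ∈ C)
    (hDir : ∀ D ⊆ C, D.Nonempty → DirectedOn (· ≤ ·) D →
      ∀ x y : A, (sSup D).r x y ↔ ∃ s ∈ D, s.r x y)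
    (hInf : ∀ S ⊆ C, sInf S ∈ C)
    {γ : Setoid A} (hγ : γ ∈ C) {a : A} (hna : ¬ γ.r one a) :
    ∃ φ, γ ≤ φ ∧ φ ∈ CmSet C ∧ ¬ φ.r one a := by
  set s : Set (Setoid A) := {φ | φ ∈ C ∧ ¬ φ.r one a} with hs
  have hchain : ∀ c ⊆ s, IsChain (· ≤ ·) c → ∀ y ∈ c, ∃ ub ∈ s, ∀ z ∈ c, z ≤ ub := by
    intro c hc hchain y hy
    refine ⟨sSup c, ⟨hSup _ (fun z hz => (hc hz).1), ?_⟩, fun z hz => le_sSup hz⟩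
    rw [hDir c (fun z hz => (hc hz).1) ⟨y, hy⟩ hchain.directedOn]
    rintro ⟨z, hz, hzr⟩
    exact (hc hz).2 hzr
  obtain ⟨m, hγm, hm⟩ := zorn_le_nonempty₀ s hchain γ ⟨hγ, hna⟩
  obtain ⟨hmC, hmna⟩ := hm.prop
  refine ⟨m, hγm, ⟨m ⊔ theta C one a, hmC, ?_, ?_, ?_⟩, hmna⟩
  · have : m ⊔ theta C one a = sSup {m, theta C one a} := by rw [sSup_pair]
    rw [this]
    exact hSup _ (by rintro z (rfl | rfl); exacts [hmC, theta_mem C hInf one a])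
  · refine lt_of_le_of_ne le_sup_left (fun h => hmna ?_)
    have : (m ⊔ theta C one a).r one a :=
      Setoid.le_def.mp le_sup_right (theta_rel C one a)
    rwa [← h] at this
  · intro β hβ hlt
    have hβa : β.r one a := by
      by_contra hβna
      exact hlt.ne (hm.eq_of_le ⟨hβ, hβna⟩ hlt.le)
    exact sup_le hlt.le (theta_le C hβ hβa)

end Aux

/-- Proposition 15 (Section 4): under (O),
`M(Θ(a,b)) = {μ ∈ Cm : (a,b) ∈ μ} = M(a) ↔ M(b) = Cm \ ((M(a) Δ M(b))↓)`. -/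
theorem stmt5 (one : A) (C : Set (Setoid A))
    (hInf : ∀ S ⊆ C, sInf S ∈ C) (hSup : ∀ S ⊆ C, sSup S ∈ C)
    (hDir : ∀ D ⊆ C, D.Nonempty → DirectedOn (· ≤ ·) D →
      ∀ x y : A, (sSup D).r x y ↔ ∃ s ∈ D, s.r x y)
    (hO : ∀ α ∈ C, ∀ a b : A, α ⊔ theta C one a = α ⊔ theta C one b ↔ α.r a b) :
    ∀ a b : A, {μ | μ ∈ CmSet C ∧ μ.r a b} = EqOpU C (MsetA C one a) (MsetA C one b) := by
  intro a b
  ext μ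
  simp only [EqOpU, Set.mem_setOf_eq, Set.mem_diff]
  constructor
  · rintro ⟨hcm, hab⟩
    refine ⟨hcm, ?_⟩
    rintro ⟨-, φ, hφ, hle⟩
    have hφab : φ.r a b := Setoid.le_def.mp hle hab
    rcases hφ with ⟨⟨hφcm, h1a⟩, hnb⟩ | ⟨⟨hφcm, h1b⟩, hna⟩
    · exact hnb ⟨hφcm, φ.trans' h1a hφab⟩
    · exact hna ⟨hφcm, φ.trans' h1b (φ.symm hφab)⟩
  · rintro ⟨hcm, hnd⟩
    refine ⟨hcm, ?_⟩
    by_contra hab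
    obtain ⟨p, hμC, hpC, hlt, hcov⟩ := hcm
    have hcm : μ ∈ CmSet C := ⟨p, hμC, hpC, hlt, hcov⟩
    have hne : μ ⊔ theta C one a ≠ μ ⊔ theta C one b :=
      fun h => hab ((hO μ hμC a b).mp h)
    have hbC : μ ⊔ theta C one b ∈ C := by
      have : μ ⊔ theta C one b = sSup {μ, theta C one b} := by rw [sSup_pair]
      rw [this]
      exact hSup _ (by rintro z (rfl | rfl); exacts [hμC, theta_mem C hInf one b])
    have haC : μ ⊔ theta C one a ∈ C := by
      have : μ ⊔ theta C one a = sSup {μ, theta C one a} := by rw [sSup_pair]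
      rw [this]
      exact hSup _ (by rintro z (rfl | rfl); exacts [hμC, theta_mem C hInf one a])
    by_cases h1 : (μ ⊔ theta C one b).r one a
    · by_cases h2 : (μ ⊔ theta C one a).r one b
      · exact hne (le_antisymm
          (sup_le le_sup_left (theta_le C hbC h1))
          (sup_le le_sup_left (theta_le C haC h2)))
      · -- extend μ ⊔ Θa to a CMI φ with ¬φ.r 1 b; then φ ∈ M(a) \ M(b)
        obtain ⟨φ, hγφ, hφcm, hφnb⟩ := exists_cmi one C hSup hDir hInf haC h2
        have hφa : φ.r one a :=
          Setoid.le_def.mp (le_trans le_sup_right hγφ) (theta_rel C one a)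
        exact hnd ⟨hcm, φ, Or.inl ⟨⟨hφcm, hφa⟩, fun h => hφnb h.2⟩,
          le_trans le_sup_left hγφ⟩
    · obtain ⟨φ, hγφ, hφcm, hφna⟩ := exists_cmi one C hSup hDir hInf hbC h1
      have hφb : φ.r one b :=
        Setoid.le_def.mp (le_trans le_sup_right hγφ) (theta_rel C one b)
      exact hnd ⟨hcm, φ, Or.inr ⟨⟨hφcm, hφb⟩, fun h => hφna h.2⟩,
        le_trans le_sup_left hγφ⟩
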